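/- Let p, q, h ≥ 1 be integers and set t_x = q·h and t_y = p·h. The dense-sparse basis A with parameters t_x, t_y is a basis for the rectangle [0, t_x²−1] × [0, t_y²−1], whose aspect ratio is p²/q², and its efficiency satisfies c = t_x²·t_y² / (2·t_x·t_y − 1)² > 1/4; moreover, for fixed p and q, c tends to 1/4 as h → ∞. -/

import Mathlib

open Pointwise Filter

lemma ds_card_aux (tx ty : ℕ) (htx : 1 ≤ tx) (hty : 1 ≤ ty) :
    ((Finset.Icc 0 (tx - 1) ×ˢ Finset.Icc 0 (ty - 1)) ∪
      (Finset.Icc 0 (tx - 1) ×ˢ Finset.Icc 0 (ty - 1)).image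
        (fun ij : ℕ × ℕ => (ij.1 * tx, ij.2 * ty))).card = 2 * tx * ty - 1 := by
  set B := Finset.Icc 0 (tx - 1) ×ˢ Finset.Icc 0 (ty - 1) with hBdef
  set f : ℕ × ℕ → ℕ × ℕ := fun ij => (ij.1 * tx, ij.2 * ty) with hfdef
  have hB : B.card = tx * ty := by
    simp only [hBdef, Finset.card_product, Nat.card_Icc]
    rw [show tx - 1 + 1 - 0 = tx by omega, show ty - 1 + 1 - 0 = ty by omega]
  have hfinj : Function.Injective f := by
    rintro ⟨a, b⟩ ⟨c, d⟩ hcd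
    simp only [hfdef, Prod.mk.injEq] at hcd
    have h1 : a = c := Nat.eq_of_mul_eq_mul_right (by omega) hcd.1
    have h2 : b = d := Nat.eq_of_mul_eq_mul_right (by omega) hcd.2
    simp [h1, h2]
  have hC : (B.image f).card = tx * ty := by
    rw [Finset.card_image_of_injective _ hfinj, hB]
  have hI : B ∩ B.image f = {((0 : ℕ), (0 : ℕ))} := by
    ext ⟨a, b⟩
    simp only [Finset.mem_inter, Finset.mem_singleton, hBdef, Finset.mem_product,
      Finset.mem_Icc, Finset.mem_image, hfdef, Prod.mk.injEq, Prod.ext_iff]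
    constructor
    · rintro ⟨⟨⟨-, ha⟩, -, hb⟩, ⟨i, j⟩, ⟨⟨-, -⟩, -, -⟩, hia, hjb⟩
      simp only at hia hjb
      have hi0 : i = 0 := by
        by_contra hi
        have : 1 ≤ i := Nat.one_le_iff_ne_zero.mpr hi
        have : tx ≤ i * tx := Nat.le_mul_of_pos_left tx (by omega)
        omega
      have hj0 : j = 0 := by
        by_contra hj
        have : 1 ≤ j := Nat.one_le_iff_ne_zero.mpr hj
        have : ty ≤ j * ty := Nat.le_mul_of_pos_left ty (by omega)
        omega
      subst hi0; subst hj0; omega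
    · rintro ⟨ha, hb⟩
      subst ha; subst hb
      refine ⟨⟨⟨le_rfl, Nat.zero_le _⟩, le_rfl, Nat.zero_le _⟩,
        ⟨0, 0⟩, ⟨⟨le_rfl, Nat.zero_le _⟩, le_rfl, Nat.zero_le _⟩, by simp, by simp⟩
  have hcu := Finset.card_union_add_card_inter B (B.image f)
  rw [hI] at hcu
  simp only [Finset.card_singleton] at hcu
  rw [hB, hC] at hcu
  rw [show 2 * tx * ty = tx * ty + tx * ty from by ring]
  omega

lemma ds_lim_aux : Tendsto (fun n : ℕ => (n : ℝ) ^ 2 / ((2 * n : ℝ) - 1) ^ 2)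
    atTop (nhds (1 / 4)) := by
  have h2 : Tendsto (fun n : ℕ => (2 : ℝ) - 1 / n) atTop (nhds 2) := by
    have := (tendsto_one_div_atTop_nhds_zero_nat : Tendsto (fun n : ℕ => 1 / (n : ℝ)) atTop (nhds 0))
    have h := (tendsto_const_nhds : Tendsto (fun _ : ℕ => (2 : ℝ)) atTop (nhds 2)).sub this
    simpa using h
  have h1 : Tendsto (fun n : ℕ => (1 : ℝ) / (2 - 1 / n)) atTop (nhds (1 / 2)) := by
    exact (tendsto_const_nhds (x := (1 : ℝ))).div h2 (by norm_num)
  have h14 : Tendsto (fun n : ℕ => ((1 : ℝ) / (2 - 1 / n)) * (1 / (2 - 1 / n)))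
      atTop (nhds (1 / 4)) := by
    have := h1.mul h1
    norm_num at this
    convert this using 2
    norm_num
  refine h14.congr' ?_
  filter_upwards [eventually_ge_atTop 1] with n hn
  have hn0 : (0 : ℝ) < n := by exact_mod_cast hn
  have hne : ((2 * n : ℝ) - 1) ≠ 0 := by
    have : (1 : ℝ) ≤ n := by exact_mod_cast hn
    nlinarith
  field_simp

theorem dense_sparse_efficiency (p q : ℕ) (hp : 1 ≤ p) (hq : 1 ≤ q) :
    (∀ h : ℕ, 1 ≤ h → ∀ tx ty : ℕ, tx = q * h → ty = p * h →
      ∀ A : Finset (ℕ × ℕ),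
        A = (Finset.Icc 0 (tx - 1) ×ˢ Finset.Icc 0 (ty - 1)) ∪
          (Finset.Icc 0 (tx - 1) ×ˢ Finset.Icc 0 (ty - 1)).image
            (fun ij => (ij.1 * tx, ij.2 * ty)) →
        (∀ x ≤ tx ^ 2 - 1, ∀ y ≤ ty ^ 2 - 1, (x, y) ∈ A + A) ∧
        ((ty ^ 2 : ℝ) / (tx ^ 2 : ℝ) = (p ^ 2 : ℝ) / (q ^ 2 : ℝ)) ∧
        ((tx ^ 2 * ty ^ 2 : ℝ) / (A.card : ℝ) ^ 2 =
          (tx ^ 2 * ty ^ 2 : ℝ) / ((2 * tx * ty : ℝ) - 1) ^ 2) ∧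
        (1 / 4 < (tx ^ 2 * ty ^ 2 : ℝ) / ((2 * tx * ty : ℝ) - 1) ^ 2)) ∧
    Tendsto (fun h : ℕ =>
        (((q * h) ^ 2 * (p * h) ^ 2 : ℕ) : ℝ) /
          ((2 * (q * h) * (p * h) : ℝ) - 1) ^ 2)
      atTop (nhds (1 / 4)) := by
  constructor
  · intro h hh tx ty htx hty A hA
    have htx1 : 1 ≤ tx := by subst htx; exact Nat.one_le_iff_ne_zero.mpr (by positivity)
    have hty1 : 1 ≤ ty := by subst hty; exact Nat.one_le_iff_ne_zero.mpr (by positivity)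
    refine ⟨?_, ?_, ?_, ?_⟩
    · intro x hx y hy
      have htx2 : 1 ≤ tx ^ 2 := Nat.one_le_pow _ _ (by omega)
      have hty2 : 1 ≤ ty ^ 2 := Nat.one_le_pow _ _ (by omega)
      have hx' : x < tx * tx := by have : tx ^ 2 = tx * tx := sq tx; omega
      have hy' : y < ty * ty := by have : ty ^ 2 = ty * ty := sq ty; omega
      have hxd : x / tx < tx := Nat.div_lt_of_lt_mul hx'
      have hyd : y / ty < ty := Nat.div_lt_of_lt_mul hy'
      have h1 : ((x / tx) * tx, (y / ty) * ty) ∈ A := by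
        rw [hA]
        apply Finset.mem_union_right
        apply Finset.mem_image.mpr
        exact ⟨(x / tx, y / ty), by
          simp only [Finset.mem_product, Finset.mem_Icc]
          exact ⟨⟨Nat.zero_le _, by omega⟩, Nat.zero_le _, by omega⟩, rfl⟩
      have h2 : (x % tx, y % ty) ∈ A := by
        rw [hA]
        apply Finset.mem_union_left
        simp only [Finset.mem_product, Finset.mem_Icc]
        have := Nat.mod_lt x (show 0 < tx by omega)
        have := Nat.mod_lt y (show 0 < ty by omega)
        exact ⟨⟨Nat.zero_le _, by omega⟩, Nat.zero_le _, by omega⟩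
      have hmem := Finset.add_mem_add h1 h2
      have hkey : ((x / tx) * tx, (y / ty) * ty) + (x % tx, y % ty) = (x, y) := by
        simp only [Prod.mk_add_mk, Prod.mk.injEq]
        exact ⟨Nat.div_add_mod' x tx, Nat.div_add_mod' y ty⟩
      rwa [hkey] at hmem
    · subst htx; subst hty
      have hq0 : (q : ℝ) ≠ 0 := by positivity
      have hh0 : (h : ℝ) ≠ 0 := by
        have : (0 : ℕ) < h := hh
        positivity
      push_cast
      field_simp
    · have hcard : A.card = 2 * tx * ty - 1 := by rw [hA]; exact ds_card_aux tx ty htx1 hty1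
      rw [hcard]
      have h1 : 1 ≤ 2 * tx * ty := by nlinarith
      have : ((2 * tx * ty - 1 : ℕ) : ℝ) = (2 * tx * ty : ℝ) - 1 := by push_cast [h1]; ring
      rw [this]
    · have h1 : 1 ≤ tx * ty := by nlinarith
      have hpos : (0 : ℝ) < ((2 * tx * ty : ℝ) - 1) ^ 2 := by
        have : (1 : ℝ) ≤ (tx : ℝ) * ty := by exact_mod_cast h1
        nlinarith
      rw [div_lt_div_iff₀ (by norm_num) hpos]
      have : (1 : ℝ) ≤ (tx : ℝ) * ty := by exact_mod_cast h1
      nlinarith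
  · have hcomp : Tendsto (fun h : ℕ => p * q * h ^ 2) atTop atTop := by
      apply tendsto_atTop_mono (fun h => ?_) tendsto_id
      have hpq : 1 ≤ p * q := Nat.one_le_iff_ne_zero.mpr (by positivity)
      calc (h : ℕ) = id h := rfl
        _ ≤ h ^ 2 := Nat.le_self_pow (by norm_num) h
        _ ≤ p * q * h ^ 2 := Nat.le_mul_of_pos_left _ (by omega)
    have := ds_lim_aux.comp hcomp
    refine this.congr ?_
    intro h
    simp only [Function.comp]
    push_cast
    ring_nf
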